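/- arXiv:2002.08158 — 3 statements merged into one kernel-verified Lean document; each statement's English description precedes it below -/
import Mathlib

section
/- Let p be a probability density on ℝ with CDF F, and let I ⊂ ℝ be an interval with P(I) = ∫_I p > 0. Then there exists a point ẑ ∈ I such that F(ẑ) is a dyadic rational in (0,1) with at most ⌊−log₂ P(I)⌋ nontrivial bits; in particular the bitlength R(ẑ) satisfies R(ẑ) ≤ −log₂ P(I). -/
open MeasureTheory Set Filter Topology

lemma my_cdf_cont (f : ℝ → ℝ) (hf : Integrable f) :
    Continuous fun z => ∫ t in Set.Iic z, f t := by
  have h := hf.continuous_primitive 0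
  have he : (fun z => ∫ t in Set.Iic z, f t)
      = fun z => (∫ t in Set.Iic (0:ℝ), f t) + ∫ t in (0:ℝ)..z, f t := by
    funext z
    rw [← intervalIntegral.integral_Iic_sub_Iic hf.integrableOn hf.integrableOn]
    ring
  rw [he]
  exact continuous_const.add h

lemma my_cdf_mono (f : ℝ → ℝ) (hf : Integrable f) (h0 : ∀ x, 0 ≤ f x) :
    Monotone fun z => ∫ t in Set.Iic z, f t := by
  intro a b hab
  exact setIntegral_mono_set hf.integrableOn
    (Filter.Eventually.of_forall h0) (HasSubset.Subset.eventuallyLE (Iic_subset_Iic.2 hab))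

lemma my_cdf_atTop (f : ℝ → ℝ) (hf : Integrable f) (h0 : ∀ x, 0 ≤ f x) :
    Tendsto (fun z => ∫ t in Set.Iic z, f t) atTop (𝓝 (∫ t, f t)) := by
  have hseq : Tendsto (fun n : ℕ => ∫ t in Set.Iic (n:ℝ), f t) atTop (𝓝 (∫ t, f t)) := by
    have hU : (⋃ n : ℕ, Set.Iic (n:ℝ)) = Set.univ := by
      apply Set.eq_univ_of_forall
      intro x
      obtain ⟨n, hn⟩ := exists_nat_ge x
      exact Set.mem_iUnion.2 ⟨n, hn⟩
    have := tendsto_setIntegral_of_monotone (μ := volume) (f := f)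
      (s := fun n : ℕ => Set.Iic (n:ℝ)) (fun n => measurableSet_Iic)
      (fun m n h => Iic_subset_Iic.2 (by exact_mod_cast h)) (by rw [hU]; exact hf.integrableOn)
    rwa [hU, setIntegral_univ] at this
  rcases tendsto_of_monotone (my_cdf_mono f hf h0) with h | ⟨l, hl⟩
  · exfalso
    obtain ⟨z, hz⟩ := (tendsto_atTop.1 h ((∫ t, f t) + 1)).exists
    have : (∫ t in Set.Iic z, f t) ≤ ∫ t, f t :=
      setIntegral_le_integral hf (Filter.Eventually.of_forall h0)
    linarith
  · have : l = ∫ t, f t :=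
      tendsto_nhds_unique (hl.comp tendsto_natCast_atTop_atTop) hseq
    rwa [this] at hl

lemma my_cdf_atBot (f : ℝ → ℝ) (hf : Integrable f) (h0 : ∀ x, 0 ≤ f x) :
    Tendsto (fun z => ∫ t in Set.Iic z, f t) atBot (𝓝 0) := by
  have hseq : Tendsto (fun n : ℕ => ∫ t in Set.Iic (-(n:ℝ)), f t) atTop (𝓝 0) := by
    have hU : (⋂ n : ℕ, Set.Iic (-(n:ℝ))) = ∅ := by
      apply Set.eq_empty_of_forall_notMem
      intro x hx
      obtain ⟨n, hn⟩ := exists_nat_gt (-x)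
      have := Set.mem_iInter.1 hx n
      simp only [Set.mem_Iic] at this
      linarith
    have := tendsto_setIntegral_of_antitone (μ := volume) (f := f)
      (s := fun n : ℕ => Set.Iic (-(n:ℝ)))
      (fun n => measurableSet_Iic)
      (fun m n h => Iic_subset_Iic.2 (by have : (m:ℝ) ≤ n := Nat.cast_le.2 h; linarith))
      ⟨0, hf.integrableOn⟩
    rwa [hU, Measure.restrict_empty, integral_zero_measure] at this
  set H := fun z => ∫ t in Set.Iic z, f t with hH
  have hA : Antitone fun z => H (-z) := fun a b hab =>
    my_cdf_mono f hf h0 (neg_le_neg hab)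
  rcases tendsto_of_antitone hA with h | ⟨l, hl⟩
  · exfalso
    obtain ⟨z, hz⟩ := (tendsto_atBot.1 h (-1)).exists
    have : (0:ℝ) ≤ H (-z) := setIntegral_nonneg measurableSet_Iic fun x _ => h0 x
    linarith
  · have hl0 : l = 0 := by
      refine tendsto_nhds_unique (hl.comp tendsto_natCast_atTop_atTop) ?_
      exact hseq
    rw [hl0] at hl
    have : Tendsto (fun z => H (- (-z))) atBot (𝓝 0) :=
      hl.comp tendsto_neg_atBot_atTop
    simpa using this

/-- Theorem 1 of the VBQ paper: let `p` be a probability density on `ℝ` with CDF `F`,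
and let `I` be an interval with probability `P(I) = ∫_I p > 0`.  Then there is a grid
point `ẑ ∈ I`, i.e. a point whose quantile `F ẑ` is a dyadic rational in `(0,1)`, whose
bitlength (number of nontrivial bits) `r` satisfies `r ≤ -log₂ P(I)`. -/
theorem vbq_grid_point_in_interval
    (p : ℝ → ℝ) (hp : ∀ z, 0 ≤ p z) (hint : Integrable p)
    (hnorm : ∫ z, p z = 1)
    (F : ℝ → ℝ) (hF : ∀ z, F z = ∫ t in Set.Iic z, p t)
    (I : Set ℝ) (hI : I.OrdConnected) (hImeas : MeasurableSet I)
    (hP : 0 < ∫ z in I, p z) :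
    ∃ z ∈ I, ∃ r : ℕ, (∃ k : ℕ, 0 < k ∧ k < 2 ^ (r + 1) ∧
        F z = (k : ℝ) / 2 ^ (r + 1)) ∧
      (r : ℝ) ≤ -Real.logb 2 (∫ z in I, p z) := by
  set P := ∫ z in I, p z with hPdef
  set q : ℝ → ℝ := I.indicator p with hqdef
  have hq0 : ∀ x, 0 ≤ q x := fun x => Set.indicator_nonneg (fun y _ => hp y) x
  have hqint : Integrable q := hint.indicator hImeas
  have hqle : ∀ x, q x ≤ p x := fun x => Set.indicator_le_self' (fun y _ => hp y) x
  have hqtot : ∫ t, q t = P := by rw [hqdef, integral_indicator hImeas]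
  set G : ℝ → ℝ := fun z => ∫ t in Set.Iic z, q t with hGdef
  have hGcont : Continuous G := my_cdf_cont q hqint
  have hGmono : Monotone G := my_cdf_mono q hqint hq0
  have hGtop : Tendsto G atTop (𝓝 P) := hqtot ▸ my_cdf_atTop q hqint hq0
  have hGbot : Tendsto G atBot (𝓝 0) := my_cdf_atBot q hqint hq0
  -- split of P at a point t
  have hGt : ∀ t, G t = ∫ z in I ∩ Set.Iic t, p z := by
    intro t
    rw [hGdef]
    simp only [hqdef]
    rw [setIntegral_indicator hImeas, Set.inter_comm]
  have hsplit : ∀ t, P = (∫ z in I ∩ Set.Iic t, p z) + ∫ z in I ∩ Set.Ioi t, p z := by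
    intro t
    have hun : (I ∩ Set.Iic t) ∪ (I ∩ Set.Ioi t) = I := by
      rw [← Set.inter_union_distrib_left, Set.Iic_union_Ioi, Set.inter_univ]
    have hd : Disjoint (I ∩ Set.Iic t) (I ∩ Set.Ioi t) :=
      Disjoint.mono Set.inter_subset_right Set.inter_subset_right (Set.Iic_disjoint_Ioi le_rfl)
    have h := setIntegral_union hd (hImeas.inter measurableSet_Ioi)
      hint.integrableOn hint.integrableOn
    rw [hun] at h
    rw [hPdef]
    exact h
  -- membership criterion
  have hmem : ∀ t, 0 < G t → G t < P → t ∈ I := by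
    intro t h1 h2
    have hne1 : (I ∩ Set.Iic t).Nonempty := by
      rw [Set.nonempty_iff_ne_empty]
      intro he
      rw [hGt t, he] at h1
      simp at h1
    have hne2 : (I ∩ Set.Ioi t).Nonempty := by
      rw [Set.nonempty_iff_ne_empty]
      intro he
      have := hsplit t
      rw [he, ← hGt t] at this
      simp at this
      rw [this] at h2
      exact lt_irrefl _ h2
    obtain ⟨a, haI, hat⟩ := hne1
    obtain ⟨b, hbI, hbt⟩ := hne2
    exact hI.out haI hbI ⟨hat, le_of_lt hbt⟩
  -- bitlength
  have hP1 : P ≤ 1 := by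
    rw [← hnorm]
    exact setIntegral_le_integral hint (Filter.Eventually.of_forall hp)
  set r := ⌊-Real.logb 2 P⌋₊ with hr
  have hrle : (r : ℝ) ≤ -Real.logb 2 P := Nat.floor_le (by
    rw [neg_nonneg]
    exact Real.logb_nonpos one_lt_two (le_of_lt hP) hP1)
  have hNpos : (0:ℝ) < 2 ^ (r + 1) := by positivity
  have hθP : 1 / (2:ℝ) ^ (r + 1) < P := by
    have h1 : -Real.logb 2 P < (r : ℝ) + 1 := by
      have := Nat.lt_floor_add_one (-Real.logb 2 P)
      rw [hr]; push_cast at this ⊢; linarith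
    have h2 : Real.logb 2 (1 / (2:ℝ) ^ (r + 1)) = -((r : ℝ) + 1) := by
      rw [one_div, Real.logb_inv, Real.logb_pow, Real.logb_self_eq_one (by norm_num)]
      push_cast; ring
    have h3 : Real.logb 2 (1 / (2:ℝ) ^ (r + 1)) < Real.logb 2 P := by
      rw [h2]; linarith
    have h4 := (Real.logb_lt_logb_iff (b := 2) (by norm_num) (by positivity) hP).1 h3
    exact h4
  have hθpos : 0 < 1 / (2:ℝ) ^ (r + 1) := by positivity
  set ε : ℝ := (P - 1 / 2 ^ (r + 1)) / 4 with hε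
  have hεpos : 0 < ε := by rw [hε]; linarith
  have hεP : ε < P - ε := by rw [hε]; linarith
  -- find a b ∈ I with G a = ε, G b = P - ε
  obtain ⟨t₁, ht₁⟩ := (hGbot.eventually (gt_mem_nhds hεpos)).exists
  obtain ⟨t₂, ht₂⟩ := (hGtop.eventually (lt_mem_nhds (show P - ε < P by linarith))).exists
  have ht12 : t₁ ≤ t₂ := by
    by_contra hcon
    push_neg at hcon
    have := hGmono (le_of_lt hcon)
    linarith
  obtain ⟨a, haIcc, hGa⟩ := intermediate_value_Icc ht12 hGcont.continuousOn
    (⟨le_of_lt ht₁, by linarith⟩ : ε ∈ Set.Icc (G t₁) (G t₂))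
  obtain ⟨b, hbIcc, hGb⟩ := intermediate_value_Icc ht12 hGcont.continuousOn
    (⟨by linarith, le_of_lt ht₂⟩ : P - ε ∈ Set.Icc (G t₁) (G t₂))
  have haI : a ∈ I := hmem a (by rw [hGa]; exact hεpos) (by rw [hGa]; linarith)
  have hbI : b ∈ I := hmem b (by rw [hGb]; linarith) (by rw [hGb]; linarith)
  have hab : a ≤ b := by
    by_contra hcon
    push_neg at hcon
    have := hGmono (le_of_lt hcon)
    rw [hGa, hGb] at this
    linarith
  -- F facts
  have hFcont : Continuous F := by
    have : F = fun z => ∫ t in Set.Iic z, p t := funext hF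
    rw [this]; exact my_cdf_cont p hint
  have hF0 : 0 ≤ F a := by
    rw [hF a]; exact setIntegral_nonneg measurableSet_Iic fun x _ => hp x
  have hF1 : F b ≤ 1 := by
    rw [hF b, ← hnorm]
    exact setIntegral_le_integral hint (Filter.Eventually.of_forall hp)
  have hFdiff : 1 / (2:ℝ) ^ (r + 1) < F b - F a := by
    have h1 : F b - F a = ∫ t in Set.Ioc a b, p t := by
      rw [hF a, hF b, ← integral_diff measurableSet_Iic hint.integrableOn
        (Set.Iic_subset_Iic.2 hab), Set.Iic_sdiff_Iic]
    have h2 : G b - G a = ∫ t in Set.Ioc a b, q t := by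
      rw [hGdef]
      simp only
      rw [← integral_diff measurableSet_Iic hqint.integrableOn
        (Set.Iic_subset_Iic.2 hab), Set.Iic_sdiff_Iic]
    have h3 : G b - G a ≤ F b - F a := by
      rw [h1, h2]
      exact setIntegral_mono hqint.integrableOn hint.integrableOn hqle
    rw [hGa, hGb, hε] at h3
    linarith
  -- the dyadic rational
  set k : ℕ := ⌊F a * 2 ^ (r + 1)⌋₊ + 1 with hk
  have hk1 : F a < (k : ℝ) / 2 ^ (r + 1) := by
    rw [lt_div_iff₀ hNpos, hk]
    push_cast
    exact Nat.lt_floor_add_one _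
  have hk2 : (k : ℝ) / 2 ^ (r + 1) ≤ F a + 1 / 2 ^ (r + 1) := by
    rw [div_le_iff₀ hNpos, hk]
    push_cast
    have := Nat.floor_le (mul_nonneg hF0 (le_of_lt hNpos))
    have h4 : (F a + 1 / 2 ^ (r + 1)) * 2 ^ (r + 1) = F a * 2 ^ (r + 1) + 1 := by
      field_simp
    rw [h4]
    linarith
  have hkb : (k : ℝ) / 2 ^ (r + 1) < F b := by linarith
  obtain ⟨z, hzIcc, hFz⟩ := intermediate_value_Icc hab hFcont.continuousOn
    (⟨le_of_lt hk1, le_of_lt hkb⟩ : (k : ℝ) / 2 ^ (r + 1) ∈ Set.Icc (F a) (F b))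
  have hzI : z ∈ I := hI.out haI hbI hzIcc
  have hklt : k < 2 ^ (r + 1) := by
    have h6 : (k : ℝ) / 2 ^ (r + 1) < 1 := lt_of_lt_of_le hkb hF1
    rw [div_lt_one hNpos] at h6
    exact_mod_cast h6
  exact ⟨z, hzI, r, ⟨k, Nat.succ_pos _, hklt, hFz⟩, hrle⟩
end

section
/- Let p be a probability density on ℝ with CDF F and let the intervals Iₙ = [n − 1/2, n + 1/2) for n ∈ ℤ have probabilities Pₙ = ∫_{Iₙ} p. For each n with Pₙ > 0 choose a grid point ẑₙ ∈ Iₙ with bitlength R(ẑₙ) ≤ −log₂ Pₙ (which exists by Theorem 1). Then the map n ↦ ẑₙ is injective and the expected bitlength satisfies Σₙ Pₙ R(ẑₙ) ≤ H, where H = −Σₙ Pₙ log₂ Pₙ is the entropy of the induced discrete distribution. -/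
open MeasureTheory

/-- Section 6 of the VBQ paper: let `p` be a probability density with CDF `F`, and
for `n ∈ ℤ` let `Pₙ` be the probability of the interval `Iₙ = [n - 1/2, n + 1/2)`.
If for each `n` with `Pₙ > 0` we choose a grid point `ẑₙ ∈ Iₙ` (a point whose
quantile `F ẑₙ` is dyadic with `R n` nontrivial bits) with `R n ≤ -log₂ Pₙ`,
then the map `n ↦ ẑₙ` is injective on `{n | Pₙ > 0}` and the expected bitlength is
at most the entropy of the induced discrete distribution:
`Σₙ Pₙ R(ẑₙ) ≤ -Σₙ Pₙ log₂ Pₙ`. -/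
theorem vbq_sparse_grid_bitrate
    (p : ℝ → ℝ) (hp : ∀ z, 0 ≤ p z) (hint : Integrable p)
    (hnorm : ∫ z, p z = 1)
    (F : ℝ → ℝ) (hF : ∀ z, F z = ∫ t in Set.Iic z, p t)
    (P : ℤ → ℝ)
    (hP : ∀ n, P n = ∫ z in Set.Ico ((n : ℝ) - 1 / 2) ((n : ℝ) + 1 / 2), p z)
    (z : ℤ → ℝ) (R : ℤ → ℕ)
    (hz : ∀ n, 0 < P n →
      z n ∈ Set.Ico ((n : ℝ) - 1 / 2) ((n : ℝ) + 1 / 2) ∧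
      (∃ k : ℕ, 0 < k ∧ k < 2 ^ (R n + 1) ∧ F (z n) = (k : ℝ) / 2 ^ (R n + 1)) ∧
      (R n : ℝ) ≤ -Real.logb 2 (P n))
    (hHsum : Summable (fun n : ℤ => -(P n * Real.logb 2 (P n)))) :
    (∀ n m : ℤ, 0 < P n → 0 < P m → z n = z m → n = m) ∧
      ∑' n : ℤ, P n * (R n : ℝ) ≤ ∑' n : ℤ, -(P n * Real.logb 2 (P n)) := by
  have hPnn : ∀ n : ℤ, 0 ≤ P n := by
    intro n
    rw [hP n]
    exact setIntegral_nonneg measurableSet_Ico fun x _ => hp x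
  have hterm : ∀ n : ℤ, P n * (R n : ℝ) ≤ -(P n * Real.logb 2 (P n)) := by
    intro n
    rcases lt_or_eq_of_le (hPnn n) with h | h
    · have := (hz n h).2.2
      calc P n * (R n : ℝ) ≤ P n * (-Real.logb 2 (P n)) :=
            mul_le_mul_of_nonneg_left this (hPnn n)
        _ = -(P n * Real.logb 2 (P n)) := by ring
    · simp [← h]
  constructor
  · intro n m hn hm hzz
    have h1 := (hz n hn).1
    have h2 := (hz m hm).1
    rw [hzz] at h1
    have a1 : (n : ℝ) - 1 / 2 ≤ z m := h1.1
    have a2 : z m < (n : ℝ) + 1 / 2 := h1.2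
    have b1 : (m : ℝ) - 1 / 2 ≤ z m := h2.1
    have b2 : z m < (m : ℝ) + 1 / 2 := h2.2
    have c1 : (n : ℝ) < m + 1 := by linarith
    have c2 : (m : ℝ) < n + 1 := by linarith
    have d1 : n < m + 1 := by exact_mod_cast c1
    have d2 : m < n + 1 := by exact_mod_cast c2
    omega
  · refine Summable.tsum_le_tsum hterm ?_ hHsum
    exact Summable.of_nonneg_of_le
      (fun n => mul_nonneg (hPnn n) (Nat.cast_nonneg _)) hterm hHsum
end

section
/- Under a factorized Gaussian posterior, the quadratic distortion weight in the VBQ objective implies: if σᵢ² > σⱼ² and all else is equal (μᵢ = μⱼ, same prior CDF F), then the optimal code point for coordinate i has bitlength at most that of the optimal code point for coordinate j, i.e., R(ξᵢ*) ≤ R(ξⱼ*) for some choice of minimizers. -/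
lemma vbq_dyadic_odd : ∀ (n k : ℕ), 0 < k → k < 2^n →
    ∃ (k' n' : ℕ), Odd k' ∧ k' < 2^n' ∧ (k:ℝ)/2^n = (k':ℝ)/2^n' := by
  intro n
  induction n with
  | zero => intro k hk hk2; omega
  | succ n ih =>
    intro k hk hk2
    rcases Nat.even_or_odd k with he | ho
    · obtain ⟨m, rfl⟩ := he
      have hm : 0 < m := by omega
      have hm2 : m < 2^n := by
        have h := hk2
        rw [pow_succ] at h; omega
      obtain ⟨k', n', h1, h2, h3⟩ := ih m hm hm2
      refine ⟨k', n', h1, h2, ?_⟩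
      rw [← h3]
      push_cast
      rw [pow_succ]
      have : (2:ℝ)^n ≠ 0 := by positivity
      field_simp
      ring
    · exact ⟨k, n+1, ho, hk2, rfl⟩

lemma vbq_exists_min (d : ℝ → ℝ) (hd : ∀ ξ, 0 ≤ d ξ) (c : ℝ) (hc : 0 < c)
    (R : ℝ → ℕ)
    (hR : ∀ k n : ℕ, Odd k → k < 2 ^ n → R ((k : ℝ) / 2 ^ n) = n - 1)
    (D : Set ℝ)
    (hD : D = {ξ : ℝ | ∃ k n : ℕ, 0 < k ∧ k < 2 ^ n ∧ ξ = (k : ℝ) / 2 ^ n}) :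
    ∃ ξ ∈ D, ∀ ξ' ∈ D, d ξ + c * R ξ ≤ d ξ' + c * R ξ' := by
  set f : ℝ → ℝ := fun ξ => d ξ + c * R ξ with hf
  have hhalf : (1:ℝ)/2 ∈ D := by
    rw [hD]; exact ⟨1, 1, by norm_num, by norm_num, by norm_num⟩
  set V := f (1/2) with hV
  obtain ⟨N, hN⟩ := exists_nat_ge (V / c)
  set T : Set ℝ := {ξ ∈ D | f ξ ≤ V} with hT
  have hTfin : T.Finite := by
    apply Set.Finite.subset
      (((Finset.range (N+2) ×ˢ Finset.range (2^(N+2))).image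
        (fun p : ℕ × ℕ => (p.2:ℝ)/2^p.1)).finite_toSet)
    intro ξ hξ
    obtain ⟨hξD, hξV⟩ := hξ
    rw [hD] at hξD
    obtain ⟨k, n, hk, hkn, rfl⟩ := hξD
    obtain ⟨k', n', hodd, hlt, heq⟩ := vbq_dyadic_odd n k hk hkn
    have hRval : R ((k:ℝ)/2^n) = n' - 1 := by rw [heq]; exact hR k' n' hodd hlt
    have hcast : (R ((k:ℝ)/2^n) : ℝ) ≤ V / c := by
      have h1 : c * R ((k:ℝ)/2^n) ≤ V := le_trans (le_add_of_nonneg_left (hd _)) hξV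
      rw [le_div_iff₀ hc]; linarith [mul_comm c (R ((k:ℝ)/2^n) : ℝ)]
    have hRN : R ((k:ℝ)/2^n) ≤ N := by exact_mod_cast le_trans hcast hN
    have hn' : n' ≤ N + 1 := by omega
    have hk'2 : k' < 2^(N+2) := lt_of_lt_of_le hlt (Nat.pow_le_pow_right (by norm_num) (by omega))
    simp only [Finset.coe_image, Set.mem_image, Finset.mem_coe, Finset.mem_product,
      Finset.mem_range]
    exact ⟨(n', k'), ⟨by omega, hk'2⟩, heq.symm⟩
  have hTne : T.Nonempty := ⟨1/2, hhalf, le_refl _⟩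
  obtain ⟨ξ, hξT, hmin⟩ := Set.exists_min_image T f hTfin hTne
  refine ⟨ξ, hξT.1, ?_⟩
  intro ξ' hξ'
  by_cases h : f ξ' ≤ V
  · exact hmin ξ' ⟨hξ', h⟩
  · exact le_trans (hmin _ ⟨hhalf, le_refl _⟩) (le_of_not_ge h)

/-- Monotonicity of the optimal VBQ bitlength in the posterior uncertainty: for the
per-coordinate objective `ℓ(ξ; σ²) = (F⁻¹(ξ) - μ)² + 2λσ²R(ξ)` over the dyadic
rationals `ξ ∈ (0,1)`, if `σᵢ² > σⱼ²` (all else equal), then there exist minimizers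
`ξᵢ*` and `ξⱼ*` of the two objectives with `R(ξᵢ*) ≤ R(ξⱼ*)`: higher uncertainty
leads to (weakly) fewer bits. -/
theorem vbq_bits_decrease_with_uncertainty
    (F Finv : ℝ → ℝ) (hF : Continuous F) (hmono : StrictMono F)
    (hrange : Set.range F = Set.Ioo (0 : ℝ) 1)
    (hleft : ∀ z, Finv (F z) = z)
    (hright : ∀ ξ ∈ Set.Ioo (0 : ℝ) 1, F (Finv ξ) = ξ)
    (μ lam σi σj : ℝ) (hlam : 0 < lam) (hσj : 0 < σj) (hij : σj ^ 2 < σi ^ 2)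
    (R : ℝ → ℕ)
    (hR : ∀ k n : ℕ, Odd k → k < 2 ^ n → R ((k : ℝ) / 2 ^ n) = n - 1)
    (D : Set ℝ) (hD : D = {ξ : ℝ | ∃ k n : ℕ, 0 < k ∧ k < 2 ^ n ∧ ξ = (k : ℝ) / 2 ^ n})
    (ℓ : ℝ → ℝ → ℝ)
    (hℓ : ∀ s ξ, ℓ s ξ = (Finv ξ - μ) ^ 2 + 2 * lam * s * (R ξ : ℝ)) :
    ∃ ξi ∈ D, ∃ ξj ∈ D,
      (∀ ξ ∈ D, ℓ (σi ^ 2) ξi ≤ ℓ (σi ^ 2) ξ) ∧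
      (∀ ξ ∈ D, ℓ (σj ^ 2) ξj ≤ ℓ (σj ^ 2) ξ) ∧
      R ξi ≤ R ξj := by
  have hσj2 : 0 < σj ^ 2 := pow_pos hσj 2
  have hσi2 : 0 < σi ^ 2 := lt_trans hσj2 hij
  have hd : ∀ ξ, 0 ≤ (Finv ξ - μ) ^ 2 := fun ξ => sq_nonneg _
  obtain ⟨ξi, hξiD, hξi⟩ := vbq_exists_min (fun ξ => (Finv ξ - μ)^2) hd
    (2 * lam * σi ^ 2) (by positivity) R hR D hD
  obtain ⟨ξj, hξjD, hξj⟩ := vbq_exists_min (fun ξ => (Finv ξ - μ)^2) hd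
    (2 * lam * σj ^ 2) (by positivity) R hR D hD
  have hmini : ∀ ξ ∈ D, ℓ (σi ^ 2) ξi ≤ ℓ (σi ^ 2) ξ := by
    intro ξ hξ; rw [hℓ, hℓ]; exact hξi ξ hξ
  have hminj : ∀ ξ ∈ D, ℓ (σj ^ 2) ξj ≤ ℓ (σj ^ 2) ξ := by
    intro ξ hξ; rw [hℓ, hℓ]; exact hξj ξ hξ
  refine ⟨ξi, hξiD, ξj, hξjD, hmini, hminj, ?_⟩
  have h1 := hξi ξj hξjD
  have h2 := hξj ξi hξiD
  have hpos : 0 < 2 * lam * (σi ^ 2 - σj ^ 2) := by nlinarith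
  by_contra hcon
  push_neg at hcon
  have hcast : (R ξj : ℝ) < (R ξi : ℝ) := by exact_mod_cast hcon
  nlinarith [mul_pos hpos (sub_pos.mpr hcast)]
end
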